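/- Let ψ(t) = ω_ψ t + ψ_per(t), where ψ_per is continuous and T-periodic, and let v : ℝ → ℂ be continuous and T-periodic. Suppose ζ̇(t) = v(t)·e^{iψ(t)}, and suppose ω_ψ + n·(2π/T) ≠ 0 for every integer n (non-resonance). If v has an absolutely convergent Fourier series and the series Σ |v_n|/|ω_ψ + n·2π/T| converges, then ζ(t) is bounded on ℝ. -/

import Mathlib

open Real Filter Complex

/-- Boundedness criterion for the center-of-mass trajectory: if
`ζ̇(t) = v(t)·e^{iψ(t)}` with `ψ(t) = ω_ψ t + ψ_per(t)`, ψ_per continuous and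
T-periodic, v continuous and T-periodic with absolutely convergent Fourier
series with coefficients `c n`, the non-resonance condition
`ω_ψ + n·(2π/T) ≠ 0` holds for every `n : ℤ`, and
`Σ_n ‖c n‖/|ω_ψ + n·2π/T|` converges, then ζ is bounded on ℝ. -/
theorem trajectory_bounded (T ωψ : ℝ) (hT : 0 < T)
    (ψper : ℝ → ℝ) (v : ℝ → ℂ) (ζ : ℝ → ℂ) (c : ℤ → ℂ)
    (hψcont : Continuous ψper) (hψper : ∀ t, ψper (t + T) = ψper t)
    (hvcont : Continuous v) (hvper : ∀ t, v (t + T) = v t)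
    (hζ : ∀ t, HasDerivAt ζ (v t * Complex.exp (Complex.I * (ωψ * t + ψper t))) t)
    (hnonres : ∀ n : ℤ, ωψ + n * (2 * π / T) ≠ 0)
    (hfourier : ∀ t : ℝ, HasSum
      (fun n : ℤ => c n * Complex.exp (Complex.I * (n * (2 * π / T) * t))) (v t))
    (habs : Summable fun n : ℤ => ‖c n‖)
    (hsum : Summable fun n : ℤ => ‖c n‖ / |ωψ + n * (2 * π / T)|) :
    ∃ M : ℝ, ∀ t : ℝ, ‖ζ t‖ ≤ M := by
  set f : ℝ → ℂ := fun s => v s * Complex.exp (Complex.I * (ωψ * s + ψper s)) with hfdef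
  set z : ℂ := Complex.exp (Complex.I * (ωψ * T)) with hzdef
  have hz0 : z ≠ 0 := Complex.exp_ne_zero _
  have hz1 : z ≠ 1 := by
    intro h
    rw [hzdef, Complex.exp_eq_one_iff] at h
    obtain ⟨n, hn⟩ := h
    have h5 : Complex.I * ((ωψ * T : ℝ) : ℂ) = Complex.I * ((n : ℂ) * (2 * π)) := by
      push_cast; rw [hn]; ring
    have h6 := mul_left_cancel₀ Complex.I_ne_zero h5
    have h4 : ωψ * T = n * (2 * π) := by exact_mod_cast h6
    apply hnonres (-n)
    have hT' : T ≠ 0 := hT.ne'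
    push_cast
    field_simp
    linarith [h4]
  have hznorm : ‖z‖ = 1 := by
    rw [hzdef, Complex.norm_exp]
    simp
  have hfcont : Continuous f := by
    apply hvcont.mul
    exact Complex.continuous_exp.comp (continuous_const.mul
      ((continuous_const.mul Complex.continuous_ofReal).add
        (Complex.continuous_ofReal.comp hψcont)))
  have hvP : Function.Periodic v T := hvper
  have hψP : Function.Periodic ψper T := hψper
  have hshift : ∀ (s : ℝ) (n : ℤ), f (s + n * T) = z ^ n * f s := by
    intro s n
    simp only [hfdef]
    rw [hvP.int_mul n s, hψP.int_mul n s]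
    rw [show Complex.I * ((ωψ : ℂ) * ((s : ℝ) + (n : ℤ) * T : ℝ) + (ψper s : ℂ))
        = Complex.I * ((ωψ : ℂ) * (s : ℂ) + (ψper s : ℂ)) + (n : ℂ) * (Complex.I * (ωψ * T)) by
      push_cast; ring]
    rw [Complex.exp_add, Complex.exp_int_mul]
    ring
  have hint : ∀ a b : ℝ, IntervalIntegrable f MeasureTheory.volume a b :=
    fun a b => hfcont.intervalIntegrable a b
  have hFTC : ∀ t : ℝ, ζ t = ζ 0 + ∫ s in (0:ℝ)..t, f s := by
    intro t
    have := intervalIntegral.integral_eq_sub_of_hasDerivAt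
      (f := ζ) (f' := f) (fun s _ => hζ s) (hint 0 t)
    rw [this]; ring
  have hshiftInt : ∀ (n : ℤ) (a b : ℝ),
      (∫ s in (a + n * T)..(b + n * T), f s) = z ^ n * ∫ s in a..b, f s := by
    intro n a b
    rw [← intervalIntegral.integral_comp_add_right f ((n : ℝ) * T)]
    simp only [hshift]
    rw [intervalIntegral.integral_const_mul]
  set A : ℂ := ∫ s in (0:ℝ)..T, f s with hAdef
  set G : ℤ → ℂ := fun n => ∫ s in (0:ℝ)..((n : ℝ) * T) , f s with hGdef
  have hrec : ∀ n : ℤ, G (n + 1) = A + z * G n := by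
    intro n
    have hsplit : (∫ s in (0:ℝ)..T, f s) + (∫ s in T..(((n:ℤ)+1 : ℤ) : ℝ) * T, f s)
        = ∫ s in (0:ℝ)..(((n:ℤ)+1 : ℤ) : ℝ) * T, f s :=
      intervalIntegral.integral_add_adjacent_intervals (hint 0 T) (hint T _)
    have h1 : (∫ s in T..(((n:ℤ)+1 : ℤ) : ℝ) * T, f s) = z * G n := by
      have h2 := hshiftInt 1 0 ((n : ℝ) * T)
      simp only [Int.cast_one, one_mul, zero_add, zpow_one] at h2
      rw [show (((n:ℤ)+1 : ℤ) : ℝ) * T = (n : ℝ) * T + T by push_cast; ring]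
      exact h2
    simp only [hGdef]
    rw [← hsplit, h1]
  have hid : ∀ n : ℤ, (z - 1) * G n = (z ^ n - 1) * A := by
    intro n
    induction n using Int.induction_on with
    | zero => simp [hGdef]
    | succ k ih =>
      have hr := hrec k
      rw [zpow_add₀ hz0 _ 1, zpow_one]
      rw [hr]
      linear_combination z * ih
    | pred k ih =>
      have hr : G (-(k:ℤ)) = A + z * G (-(k:ℤ) - 1) := by
        have h7 := hrec (-(k:ℤ) - 1)
        rw [show (-(k:ℤ) - 1 + 1 : ℤ) = -(k:ℤ) by ring] at h7
        exact h7
      have hzi : z * z⁻¹ = 1 := mul_inv_cancel₀ hz0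
      have key : z * ((z - 1) * G (-(k:ℤ) - 1)) = z * ((z ^ (-(k:ℤ) - 1) - 1) * A) := by
        calc z * ((z - 1) * G (-(k:ℤ) - 1)) = (z - 1) * (z * G (-(k:ℤ) - 1)) := by ring
          _ = (z - 1) * (G (-(k:ℤ)) - A) := by rw [hr]; ring
          _ = (z ^ (-(k:ℤ)) - 1) * A - (z - 1) * A := by rw [mul_sub, ih]
          _ = z * ((z ^ (-(k:ℤ) - 1) - 1) * A) := by
              rw [show (-(k:ℤ) - 1 : ℤ) = (-(k:ℤ)) + (-1) by ring, zpow_add₀ hz0, zpow_neg_one]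
              linear_combination (-(z ^ (-(k:ℤ)) * A)) * hzi
      exact mul_left_cancel₀ hz0 key
  have hzm1 : (0:ℝ) < ‖z - 1‖ := by
    rw [norm_pos_iff]
    exact sub_ne_zero_of_ne hz1
  have hGbound : ∀ n : ℤ, ‖G n‖ ≤ 2 * ‖A‖ / ‖z - 1‖ := by
    intro n
    have h1 : ‖z - 1‖ * ‖G n‖ = ‖z ^ n - 1‖ * ‖A‖ := by
      rw [← norm_mul, ← norm_mul, hid n]
    have h2 : ‖z ^ n - 1‖ ≤ 2 := by
      calc ‖z ^ n - 1‖ ≤ ‖z ^ n‖ + ‖(1:ℂ)‖ := norm_sub_le _ _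
        _ = 2 := by rw [norm_zpow, hznorm, one_zpow, norm_one]; norm_num
    rw [le_div_iff₀ hzm1]
    calc ‖G n‖ * ‖z - 1‖ = ‖z ^ n - 1‖ * ‖A‖ := by rw [mul_comm]; exact h1
      _ ≤ 2 * ‖A‖ := mul_le_mul_of_nonneg_right h2 (norm_nonneg _)
  obtain ⟨C, hC⟩ := (isCompact_Icc (a := (0:ℝ)) (b := T)).exists_bound_of_continuousOn
    hfcont.continuousOn
  have hC0 : 0 ≤ C := le_trans (norm_nonneg _) (hC 0 ⟨le_refl _, hT.le⟩)
  refine ⟨‖ζ 0‖ + 2 * ‖A‖ / ‖z - 1‖ + C * T, fun t => ?_⟩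
  set n : ℤ := ⌊t / T⌋ with hndef
  have hr0 : 0 ≤ t - (n : ℝ) * T := Int.sub_floor_div_mul_nonneg t hT
  have hrT : t - (n : ℝ) * T < T := Int.sub_floor_div_mul_lt t hT
  have hsplit : (∫ s in (0:ℝ)..((n:ℝ)*T), f s) + (∫ s in ((n:ℝ)*T)..t, f s)
      = ∫ s in (0:ℝ)..t, f s :=
    intervalIntegral.integral_add_adjacent_intervals (hint _ _) (hint _ _)
  have htail : ‖∫ s in ((n:ℝ)*T)..t, f s‖ ≤ C * T := by
    have h1 : (∫ s in ((n:ℝ)*T)..t, f s) = z ^ n * ∫ s in (0:ℝ)..(t - (n:ℝ)*T), f s := by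
      have := hshiftInt n 0 (t - (n:ℝ)*T)
      simp only [zero_add, sub_add_cancel] at this
      exact this
    rw [h1, norm_mul, norm_zpow, hznorm, one_zpow, one_mul]
    have hb : ‖∫ s in (0:ℝ)..(t - (n:ℝ)*T), f s‖ ≤ C * |t - (n:ℝ)*T - 0| := by
      apply intervalIntegral.norm_integral_le_of_norm_le_const
      intro x hx
      rw [Set.uIoc_of_le hr0] at hx
      exact hC x ⟨hx.1.le, le_trans hx.2 (by linarith)⟩
    calc ‖∫ s in (0:ℝ)..(t - (n:ℝ)*T), f s‖ ≤ C * |t - (n:ℝ)*T - 0| := hb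
      _ ≤ C * T := by
          apply mul_le_mul_of_nonneg_left _ hC0
          rw [sub_zero, _root_.abs_of_nonneg hr0]
          linarith
  calc ‖ζ t‖ = ‖ζ 0 + ((∫ s in (0:ℝ)..((n:ℝ)*T), f s) + ∫ s in ((n:ℝ)*T)..t, f s)‖ := by
        rw [hsplit, ← hFTC]
    _ ≤ ‖ζ 0‖ + (‖∫ s in (0:ℝ)..((n:ℝ)*T), f s‖ + ‖∫ s in ((n:ℝ)*T)..t, f s‖) := by
        apply le_trans (norm_add_le _ _)
        exact add_le_add_right (norm_add_le _ _) _
    _ ≤ ‖ζ 0‖ + (2 * ‖A‖ / ‖z - 1‖ + C * T) := by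
        apply add_le_add_right
        exact add_le_add (hGbound n) htail
    _ = ‖ζ 0‖ + 2 * ‖A‖ / ‖z - 1‖ + C * T := by ring
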